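/- arXiv:1903.06968 — 3 statements merged into one kernel-verified Lean document; each statement's English description precedes it below -/
import Mathlib

section
/- Define q* ∈ (0,1) as a solution of 1 + √(1 − q²) = q·(π/2 + arccos(q)). Then such a solution exists and is unique in the open interval (0,1). -/
open Real

noncomputable def fAux (q : ℝ) : ℝ := q * (π / 2 + Real.arccos q) - (1 + Real.sqrt (1 - q ^ 2))

lemma fAux_hasDerivAt {x : ℝ} (hx : x ∈ Set.Ioo (0:ℝ) 1) :
    HasDerivAt fAux (π / 2 + Real.arccos x) x := by
  obtain ⟨hx0, hx1⟩ := hx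
  have hne1 : x ≠ 1 := ne_of_lt hx1
  have hnem1 : x ≠ -1 := by linarith
  have hs : (0:ℝ) < 1 - x ^ 2 := by nlinarith
  have hsne : (1 - x ^ 2) ≠ 0 := ne_of_gt hs
  have h1 : HasDerivAt (fun q : ℝ => q * (π / 2 + Real.arccos q))
      (1 * (π / 2 + Real.arccos x) + x * (-(1 / Real.sqrt (1 - x ^ 2)))) x := by
    have := (hasDerivAt_id x).mul ((hasDerivAt_const x (π/2)).add (Real.hasDerivAt_arccos hnem1 hne1))
    exact this.congr_deriv (by simp only [Pi.add_apply, id]; ring)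
  have h2 : HasDerivAt (fun q : ℝ => 1 - q ^ 2) (-(2 * x)) x := by
    have := ((hasDerivAt_pow 2 x).const_sub 1)
    simpa using this
  have h3 : HasDerivAt (fun q : ℝ => Real.sqrt (1 - q ^ 2))
      (-(2 * x) / (2 * Real.sqrt (1 - x ^ 2))) x := by
    have := (Real.hasDerivAt_sqrt hsne).comp x h2
    exact this.congr_deriv (by ring)
  have h4 : HasDerivAt (fun q : ℝ => 1 + Real.sqrt (1 - q ^ 2))
      (-(2 * x) / (2 * Real.sqrt (1 - x ^ 2))) x := h3.const_add 1
  have h := h1.sub h4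
  have hsqrt : Real.sqrt (1 - x ^ 2) ≠ 0 := by
    positivity
  have heq : 1 * (π / 2 + Real.arccos x) + x * (-(1 / Real.sqrt (1 - x ^ 2))) -
      -(2 * x) / (2 * Real.sqrt (1 - x ^ 2)) = π / 2 + Real.arccos x := by
    field_simp
    ring
  rw [heq] at h
  exact h

lemma fAux_strictMono : StrictMonoOn fAux (Set.Icc (0:ℝ) 1) := by
  apply strictMonoOn_of_deriv_pos (convex_Icc 0 1)
  · apply ContinuousOn.sub
    · exact (continuous_id.mul (continuous_const.add Real.continuous_arccos)).continuousOn
    · exact (continuous_const.add (Real.continuous_sqrt.comp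
        (continuous_const.sub (continuous_pow 2)))).continuousOn
  · intro x hx
    rw [interior_Icc] at hx
    rw [(fAux_hasDerivAt hx).deriv]
    have := Real.arccos_nonneg x
    have := Real.pi_pos
    linarith

theorem stmt_6 :
    ∃! q : ℝ, q ∈ Set.Ioo (0 : ℝ) 1 ∧
      1 + Real.sqrt (1 - q ^ 2) = q * (π / 2 + Real.arccos q) := by
  have hcont : ContinuousOn fAux (Set.Icc (0:ℝ) 1) := by
    apply ContinuousOn.sub
    · exact (continuous_id.mul (continuous_const.add Real.continuous_arccos)).continuousOn
    · exact (continuous_const.add (Real.continuous_sqrt.comp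
        (continuous_const.sub (continuous_pow 2)))).continuousOn
  have hf0 : fAux 0 = -2 := by simp [fAux]; norm_num
  have hf1 : fAux 1 = π / 2 - 1 := by
    simp [fAux, Real.arccos_one]
  have hmem : (0:ℝ) ∈ Set.Ioo (fAux 0) (fAux 1) := by
    rw [hf0, hf1]
    constructor
    · norm_num
    · have := Real.pi_gt_three; linarith
  have := intermediate_value_Ioo (by norm_num : (0:ℝ) ≤ 1) hcont hmem
  obtain ⟨q, hq, hfq⟩ := this
  refine ⟨q, ⟨hq, ?_⟩, ?_⟩
  · have : q * (π / 2 + Real.arccos q) - (1 + Real.sqrt (1 - q ^ 2)) = 0 := hfq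
    linarith
  · rintro y ⟨hy, hey⟩
    have hfy : fAux y = 0 := by unfold fAux; linarith
    have hinj := fAux_strictMono.injOn
    exact hinj (Set.mem_Icc_of_Ioo hy) (Set.mem_Icc_of_Ioo hq) (by rw [hfy, hfq])
end

section
/- Fix b ∈ (0,1) and c with 0 ≤ c < b, and let F₂(x, a) = a + 2(b − c) + (2c − b)x + 2(c − b)√(1 − x). A point x ∈ (0,1) is a fixed point of F₂(·, a) with ∂F₂/∂x(x, a) = 1 if and only if a = 1 − b + (b − c)²/(1 + b − 2c). -/
open Real

theorem stmt_8 (b c : ℝ) (hb : b ∈ Set.Ioo (0 : ℝ) 1) (hc : 0 ≤ c) (hcb : c < b)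
    (F : ℝ → ℝ → ℝ)
    (hF : ∀ a x, F a x = a + 2 * (b - c) + (2 * c - b) * x + 2 * (c - b) * Real.sqrt (1 - x))
    (a : ℝ) :
    (∃ x ∈ Set.Ioo (0 : ℝ) 1, F a x = x ∧ deriv (F a) x = 1) ↔
      a = 1 - b + (b - c) ^ 2 / (1 + b - 2 * c) := by
  obtain ⟨hb0, hb1⟩ := hb
  have hD : 0 < 1 + b - 2 * c := by nlinarith
  have hFa : ∀ a, F a = fun x => a + 2 * (b - c) + (2 * c - b) * x +
      2 * (c - b) * Real.sqrt (1 - x) := fun a => funext (hF a)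
  have key : ∀ x : ℝ, x < 1 → deriv (F a) x =
      (2 * c - b) + (b - c) / Real.sqrt (1 - x) := by
    intro x hx1
    have h1x : 0 < 1 - x := by linarith
    have hs : 0 < Real.sqrt (1 - x) := Real.sqrt_pos.mpr h1x
    have h1 : HasDerivAt (fun x : ℝ => 1 - x) (-1) x := by
      simpa using (hasDerivAt_id' x).const_sub (1 : ℝ)
    have h2 : HasDerivAt Real.sqrt (1 / (2 * Real.sqrt (1 - x))) (1 - x) :=
      Real.hasDerivAt_sqrt (ne_of_gt h1x)
    have h3 : HasDerivAt (fun x => Real.sqrt (1 - x))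
        (1 / (2 * Real.sqrt (1 - x)) * (-1)) x := h2.comp x h1
    have h4 : HasDerivAt (fun x => a + 2 * (b - c) + (2 * c - b) * x +
        2 * (c - b) * Real.sqrt (1 - x))
        (0 + (2 * c - b) * 1 + 2 * (c - b) * (1 / (2 * Real.sqrt (1 - x)) * (-1))) x :=
      (((hasDerivAt_const x (a + 2 * (b - c))).add
        ((hasDerivAt_id x).const_mul (2 * c - b))).add (h3.const_mul (2 * (c - b))))
    rw [hFa, h4.deriv]
    field_simp
    ring
  constructor
  · rintro ⟨x, ⟨hx0, hx1⟩, hfix, hder⟩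
    have h1x : 0 < 1 - x := by linarith
    rw [hF] at hfix
    have hs : 0 < Real.sqrt (1 - x) := Real.sqrt_pos.mpr h1x
    set s := Real.sqrt (1 - x) with hsdef
    have hs2 : s ^ 2 = 1 - x := Real.sq_sqrt h1x.le
    rw [key x hx1] at hder
    have hseq : s * (1 + b - 2 * c) = b - c := by
      have h : (b - c) / s = 1 + b - 2 * c := by linarith
      field_simp at h
      linarith
    have haD : a * (1 + b - 2 * c) = (1 - b) * (1 + b - 2 * c) + (b - c) ^ 2 := by
      linear_combination (1 + b - 2 * c) * hfix + (1 + b - 2 * c) ^ 2 * hs2 -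
        (s * (1 + b - 2 * c) - (b - c)) * hseq
    have h2 : 1 - b + (b - c) ^ 2 / (1 + b - 2 * c) =
        ((1 - b) * (1 + b - 2 * c) + (b - c) ^ 2) / (1 + b - 2 * c) := by
      rw [eq_div_iff (ne_of_gt hD), add_mul, div_mul_cancel₀ _ (ne_of_gt hD)]
    rw [h2, eq_div_iff (ne_of_gt hD)]
    linear_combination haD
  · intro ha
    set D := 1 + b - 2 * c with hDdef
    set s := (b - c) / D with hsdef
    have hbc : 0 < b - c := by linarith
    have hs0 : 0 < s := div_pos hbc hD
    have hs1 : s < 1 := by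
      rw [hsdef, div_lt_one hD]; nlinarith
    have hsD : s * D = b - c := by
      rw [hsdef]; field_simp
    have haD : a * D = (1 - b) * D + (b - c) ^ 2 := by
      rw [ha]; field_simp
    have hsq : Real.sqrt (1 - (1 - s ^ 2)) = s := by
      rw [show 1 - (1 - s ^ 2) = s ^ 2 by ring, Real.sqrt_sq hs0.le]
    refine ⟨1 - s ^ 2, ⟨by nlinarith, by nlinarith⟩, ?_, ?_⟩
    · rw [hF, hsq]
      refine mul_left_cancel₀ (ne_of_gt hD) ?_
      linear_combination haD + (s * D - (b - c)) * hsD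
    · rw [key _ (by nlinarith), hsq, hsdef]
      field_simp
      ring
end

section
/- Let n ≥ 2, b ∈ (0,1), and c₁ with 0 < c₁ ≤ n/(n−1). Then for all x ∈ (0,1), F_n'(x) = (b/(2√(1−x)))·(c₁ + (1 − c₁)·n·(√(1−x))^{n−1}) > 0; hence F_n is strictly increasing on (0,1). -/
open Real

theorem stmt_10 (n : ℕ) (hn : 2 ≤ n) (a b c₁ : ℝ)
    (hb : b ∈ Set.Ioo (0 : ℝ) 1) (hc₁ : 0 < c₁) (hc₁' : c₁ ≤ n / (n - 1 : ℝ))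
    (F : ℝ → ℝ)
    (hF : ∀ x, F x = a + b * (1 - c₁ * Real.sqrt (1 - x)
        + (c₁ - 1) * (Real.sqrt (1 - x)) ^ n)) :
    (∀ x ∈ Set.Ioo (0 : ℝ) 1,
      deriv F x = (b / (2 * Real.sqrt (1 - x)))
          * (c₁ + (1 - c₁) * n * (Real.sqrt (1 - x)) ^ (n - 1)) ∧
      0 < deriv F x) ∧
    StrictMonoOn F (Set.Ioo 0 1) := by
  obtain ⟨hb0, hb1⟩ := hb
  have hFe : F = fun x => a + b * (1 - c₁ * Real.sqrt (1 - x)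
      + (c₁ - 1) * (Real.sqrt (1 - x)) ^ n) := funext hF
  have hn1 : (1:ℝ) ≤ (n:ℝ) - 1 := by
    have : (2:ℝ) ≤ n := by exact_mod_cast hn
    linarith
  have hcn : c₁ * ((n:ℝ) - 1) ≤ n := (le_div_iff₀ (by linarith)).mp hc₁'
  have key : ∀ x ∈ Set.Ioo (0:ℝ) 1,
      HasDerivAt F ((b / (2 * Real.sqrt (1 - x)))
        * (c₁ + (1 - c₁) * n * (Real.sqrt (1 - x)) ^ (n - 1))) x ∧
      0 < (b / (2 * Real.sqrt (1 - x)))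
        * (c₁ + (1 - c₁) * n * (Real.sqrt (1 - x)) ^ (n - 1)) := by
    intro x hx
    have h1x : (0:ℝ) < 1 - x := by linarith [hx.2]
    have hs : 0 < Real.sqrt (1 - x) := Real.sqrt_pos.mpr h1x
    have hs1 : Real.sqrt (1 - x) < 1 := by
      nlinarith [Real.sq_sqrt (le_of_lt h1x), Real.sqrt_pos.mpr h1x, hx.1]
    set t := Real.sqrt (1 - x) with ht
    have hsd : HasDerivAt (fun x => Real.sqrt (1 - x)) (-(1/(2 * t))) x := by
      have h := (Real.hasDerivAt_sqrt (ne_of_gt h1x)).comp x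
        ((hasDerivAt_const x (1:ℝ)).sub (hasDerivAt_id x))
      refine h.congr_deriv ?_
      ring
    have hd : HasDerivAt F (b * ((0 - c₁ * (-(1/(2 * t))))
        + (c₁ - 1) * ((n : ℝ) * t ^ (n-1) * (-(1/(2 * t)))))) x := by
      rw [hFe]
      exact ((((hasDerivAt_const x (1:ℝ)).sub (hsd.const_mul c₁)).add
        ((hsd.pow n).const_mul (c₁ - 1))).const_mul b).const_add a
    have heq : b * ((0 - c₁ * (-(1/(2 * t))))
        + (c₁ - 1) * ((n : ℝ) * t ^ (n-1) * (-(1/(2 * t)))))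
        = (b / (2 * t)) * (c₁ + (1 - c₁) * n * t ^ (n - 1)) := by
      field_simp
      ring_nf
    rw [heq] at hd
    refine ⟨hd, ?_⟩
    have hfac : 0 < c₁ + (1 - c₁) * n * t ^ (n - 1) := by
      rcases le_or_gt c₁ 1 with h | h
      · have hnn : 0 ≤ (1 - c₁) * n * t ^ (n-1) := by
          apply mul_nonneg (mul_nonneg (by linarith) (by positivity))
          positivity
        linarith
      · have htlt : t ^ (n-1) < 1 := pow_lt_one₀ (le_of_lt hs) hs1 (by omega)
        have hneg : (1 - c₁) * (n:ℝ) < 0 := by nlinarith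
        nlinarith [mul_lt_mul_of_neg_left htlt hneg]
    positivity
  constructor
  · intro x hx
    obtain ⟨hd, hp⟩ := key x hx
    exact ⟨hd.deriv, hd.deriv ▸ hp⟩
  · apply strictMonoOn_of_deriv_pos (convex_Ioo 0 1)
    · rw [hFe]
      exact (Continuous.continuousOn (by continuity))
    · intro x hx
      rw [interior_Ioo] at hx
      obtain ⟨hd, hp⟩ := key x hx
      exact hd.deriv ▸ hp
end
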